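/- arXiv:1403.0985 — 3 statements merged into one kernel-verified Lean document; each statement's English description precedes it below -/
import Mathlib

section
/- For l ≥ 1 and x ∈ (-1,1) with x ≠ 0, the integral ∫_{-1}^{1} t(1+xt)^l dt equals 2·∑_{i=1}^{⌊(l+1)/2⌋} C(l, 2i-1)·x^{2i-1}/(2i+1), and this quantity is nonzero. -/
open Real Set intervalIntegral

theorem koiso_example_integral
    (l : ℕ) (hl : 1 ≤ l) (x : ℝ) (hx : x ∈ Ioo (-1 : ℝ) 1) (hx0 : x ≠ 0) :
    (∫ t in (-1 : ℝ)..1, t * (1 + x * t) ^ l) =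
      2 * ∑ i ∈ Finset.Icc 1 ((l + 1) / 2),
        (l.choose (2 * i - 1) : ℝ) * x ^ (2 * i - 1) / (2 * i + 1) ∧
    (∫ t in (-1 : ℝ)..1, t * (1 + x * t) ^ l) ≠ 0 := by
  have hexp : ∀ t : ℝ, t * (1 + x * t) ^ l
      = ∑ k ∈ Finset.range (l + 1), (l.choose k : ℝ) * x ^ k * t ^ (k + 1) := by
    intro t
    rw [add_comm (1:ℝ) (x*t), add_pow, Finset.mul_sum]
    refine Finset.sum_congr rfl fun k hk => ?_
    rw [mul_pow]
    simp only [Finset.mem_range] at hk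
    ring
  have key : (∫ t in (-1 : ℝ)..1, t * (1 + x * t) ^ l)
      = 2 * ∑ i ∈ Finset.Icc 1 ((l + 1) / 2),
        (l.choose (2 * i - 1) : ℝ) * x ^ (2 * i - 1) / (2 * i + 1) := by
    simp_rw [hexp]
    rw [intervalIntegral.integral_finset_sum (f := fun k t => (l.choose k : ℝ) * x ^ k * t ^ (k + 1)) (fun k _ =>
      ((continuous_const.mul (continuous_pow (k + 1))).intervalIntegrable _ _))]
    have hint : ∀ k ∈ Finset.range (l + 1),
        (∫ t in (-1 : ℝ)..1, (l.choose k : ℝ) * x ^ k * t ^ (k + 1))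
          = (l.choose k : ℝ) * x ^ k * ((1 - (-1 : ℝ) ^ (k + 2)) / (k + 2)) := by
      intro k _
      rw [intervalIntegral.integral_const_mul, integral_pow]
      congr 1
      norm_num [add_assoc]
    rw [Finset.sum_congr rfl hint]
    have hodd : ∑ k ∈ Finset.range (l + 1),
        (l.choose k : ℝ) * x ^ k * ((1 - (-1 : ℝ) ^ (k + 2)) / (k + 2))
        = ∑ k ∈ (Finset.range (l + 1)).filter (fun k => Odd k),
            (l.choose k : ℝ) * x ^ k * ((1 - (-1 : ℝ) ^ (k + 2)) / (k + 2)) := by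
      rw [Finset.sum_filter]
      refine Finset.sum_congr rfl fun k _ => ?_
      rcases Nat.even_or_odd k with he | ho
      · have hpow : (-1 : ℝ) ^ (k + 2) = 1 := (he.add (by norm_num)).neg_one_pow
        have : ¬ Odd k := by simpa [Nat.not_odd_iff_even] using he
        simp [hpow, this]
      · simp [ho]
    rw [hodd]
    rw [Finset.sum_nbij' (fun k => (k + 1) / 2) (fun i => 2 * i - 1)
      (t := Finset.Icc 1 ((l + 1) / 2))
      (g := fun i => (l.choose (2 * i - 1) : ℝ) * x ^ (2 * i - 1)
            * ((1 - (-1 : ℝ) ^ (2 * i - 1 + 2)) / ((2 * i - 1 : ℕ) + 2)))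
      (fun k hk => by
        simp only [Finset.mem_filter, Finset.mem_range] at hk
        obtain ⟨hk1, m, hm⟩ := hk
        simp only [Finset.mem_Icc]; (try dsimp only); omega)
      (fun i hi => by
        simp only [Finset.mem_Icc] at hi
        simp only [Finset.mem_filter, Finset.mem_range]
        (try dsimp only)
        constructor
        · omega
        · exact ⟨i - 1, by omega⟩)
      (fun k hk => by
        simp only [Finset.mem_filter, Finset.mem_range] at hk
        obtain ⟨_, m, hm⟩ := hk; (try dsimp only); omega)
      (fun i hi => by
        simp only [Finset.mem_Icc] at hi; (try dsimp only); omega)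
      (fun k hk => by
        simp only [Finset.mem_filter, Finset.mem_range] at hk
        obtain ⟨_, m, hm⟩ := hk
        have h2 : 2 * ((k + 1) / 2) - 1 = k := by omega
        (try dsimp only)
        rw [h2])]
    rw [Finset.mul_sum]
    refine Finset.sum_congr rfl fun i hi => ?_
    simp only [Finset.mem_Icc] at hi
    have h1 : Odd (2 * i - 1) := ⟨i - 1, by omega⟩
    have hpow : (-1 : ℝ) ^ (2 * i - 1 + 2) = -1 := (h1.add_even (by norm_num)).neg_one_pow
    have hcast : ((2 * i - 1 : ℕ) : ℝ) = 2 * i - 1 := by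
      have : (1 : ℕ) ≤ 2 * i := by omega
      push_cast [this]; ring
    rw [hpow, hcast]
    have h3 : (2 * (i : ℝ) - 1 + 2) = 2 * i + 1 := by ring
    rw [h3]
    have hne : (2 * (i : ℝ) + 1) ≠ 0 := by positivity
    field_simp
    ring
  refine ⟨key, ?_⟩
  rw [key]
  have h1mem : 1 ∈ Finset.Icc 1 ((l + 1) / 2) := by
    simp only [Finset.mem_Icc]; omega
  have hchoose1 : (l.choose (2 * 1 - 1) : ℝ) = l := by norm_num
  rcases hx0.lt_or_gt with hneg | hpos
  · have hsum : 0 < ∑ i ∈ Finset.Icc 1 ((l + 1) / 2),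
        (-((l.choose (2 * i - 1) : ℝ) * x ^ (2 * i - 1) / (2 * i + 1))) := by
      apply Finset.sum_pos'
      · intro i hi
        simp only [Finset.mem_Icc] at hi
        have hodd : Odd (2 * i - 1) := ⟨i - 1, by omega⟩
        have hxp : x ^ (2 * i - 1) ≤ 0 := hodd.pow_nonpos hneg.le
        have : (l.choose (2 * i - 1) : ℝ) * x ^ (2 * i - 1) / (2 * i + 1) ≤ 0 := by
          apply div_nonpos_of_nonpos_of_nonneg
          · exact mul_nonpos_of_nonneg_of_nonpos (Nat.cast_nonneg _) hxp
          · positivity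
        linarith
      · refine ⟨1, h1mem, ?_⟩
        simp only [hchoose1]
        have : (l : ℝ) * x ^ (2 * 1 - 1) / (2 * 1 + 1) < 0 := by
          apply div_neg_of_neg_of_pos
          · have hl' : (0 : ℝ) < l := by exact_mod_cast hl
            simpa using mul_neg_of_pos_of_neg hl' hneg
          · norm_num
        linarith
    rw [Finset.sum_neg_distrib] at hsum
    have hS : ∑ i ∈ Finset.Icc 1 ((l + 1) / 2),
        (l.choose (2 * i - 1) : ℝ) * x ^ (2 * i - 1) / (2 * i + 1) < 0 := by linarith
    exact ne_of_lt (by linarith)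
  · have hsum : 0 < ∑ i ∈ Finset.Icc 1 ((l + 1) / 2),
        (l.choose (2 * i - 1) : ℝ) * x ^ (2 * i - 1) / (2 * i + 1) := by
      apply Finset.sum_pos'
      · intro i hi
        have hxp : 0 ≤ x ^ (2 * i - 1) := by positivity
        positivity
      · refine ⟨1, h1mem, ?_⟩
        simp only [hchoose1]
        have hl' : (0 : ℝ) < l := by exact_mod_cast hl
        have : (0:ℝ) < x ^ (2 * 1 - 1) := by positivity
        positivity
    positivity
end

section
/- Let ξ be C^1 on [-1,1] with ξ(t_0) = 0 for a unique t_0 ∈ (-1,1), ξ > 0 on (-1,t_0), ξ < 0 on (t_0,1), ξ'(t_0) < 0, and set η(t) = ∫_{-1}^t ξ(s)ds with η(1) = 0. Suppose moreover (log|ξ|)'' < 0 on (-1,t_0)∪(t_0,1). Then ξ(t)^2 - η(t)ξ'(t) > 0 for all t ∈ (-1,1). -/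
open Real Set intervalIntegral

theorem xi_sq_minus_eta_xi'_pos
    (ξ : ℝ → ℝ) (hξ : ContDiffOn ℝ 1 ξ (Icc (-1) 1))
    (t₀ : ℝ) (ht₀ : t₀ ∈ Ioo (-1 : ℝ) 1)
    (hroot : ξ t₀ = 0)
    (hpos : ∀ t ∈ Ioo (-1 : ℝ) t₀, ξ t > 0)
    (hneg : ∀ t ∈ Ioo t₀ (1 : ℝ), ξ t < 0)
    (hξ' : deriv ξ t₀ < 0)
    (η : ℝ → ℝ) (hη : ∀ t, η t = ∫ s in (-1 : ℝ)..t, ξ s)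
    (hη1 : η 1 = 0)
    (hlogconc : ∀ t ∈ Ioo (-1 : ℝ) 1, t ≠ t₀ →
      deriv (deriv (fun s => Real.log |ξ s|)) t < 0) :
    ∀ t ∈ Ioo (-1 : ℝ) 1, ξ t ^ 2 - η t * deriv ξ t > 0 := by
  obtain ⟨ht₀1, ht₀2⟩ := ht₀
  have hcξ : ContinuousOn ξ (Icc (-1) 1) := hξ.continuousOn
  have hnhds : ∀ t ∈ Ioo (-1 : ℝ) 1, Icc (-1 : ℝ) 1 ∈ nhds t := fun t ht =>
    Icc_mem_nhds ht.1 ht.2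
  have hdiff : ∀ t ∈ Ioo (-1 : ℝ) 1, HasDerivAt ξ (deriv ξ t) t := by
    intro t ht
    have := (hξ.differentiableOn one_ne_zero).differentiableAt (hnhds t ht)
    exact this.hasDerivAt
  -- continuity of deriv ξ on the open interval
  have hcξ' : ContinuousOn (deriv ξ) (Ioo (-1 : ℝ) 1) := by
    have h1 : ContinuousOn (derivWithin ξ (Icc (-1) 1)) (Icc (-1 : ℝ) 1) :=
      (hξ.continuousOn_derivWithin (uniqueDiffOn_Icc (by norm_num)) le_rfl)
    refine (h1.mono Ioo_subset_Icc_self).congr fun x hx => ?_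
    exact (derivWithin_of_mem_nhds (hnhds x hx)).symm
  -- η facts
  have hInt : ∀ a b : ℝ, a ∈ Icc (-1:ℝ) 1 → b ∈ Icc (-1:ℝ) 1 →
      IntervalIntegrable ξ MeasureTheory.volume a b := by
    intro a b ha hb
    apply ContinuousOn.intervalIntegrable
    exact hcξ.mono (Set.uIcc_subset_Icc ha hb)
  have hηc : ContinuousOn η (Icc (-1 : ℝ) 1) := by
    have := intervalIntegral.continuousOn_primitive_interval'
      (μ := MeasureTheory.volume) (f := ξ) (a := (-1:ℝ)) (b₁ := (-1:ℝ)) (b₂ := (1:ℝ))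
      (hInt (-1) 1 (by norm_num) (by norm_num)) (by rw [Set.uIcc_of_le (by norm_num)]; norm_num)
    rw [Set.uIcc_of_le (by norm_num : (-1:ℝ) ≤ 1)] at this
    exact this.congr fun x _ => hη x
  have hηd : ∀ t ∈ Ioo (-1 : ℝ) 1, HasDerivAt η (ξ t) t := by
    intro t ht
    have h1 : HasDerivAt (fun u => ∫ s in (-1:ℝ)..u, ξ s) (ξ t) t := by
      refine intervalIntegral.integral_hasDerivAt_right
        (hInt (-1) t (by norm_num) ⟨le_of_lt ht.1, le_of_lt ht.2⟩) ?_ ?_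
      · exact (hcξ.mono Ioo_subset_Icc_self).stronglyMeasurableAtFilter isOpen_Ioo t ht
      · exact (hcξ.mono Ioo_subset_Icc_self).continuousAt (isOpen_Ioo.mem_nhds ht)
    exact h1.congr_of_eventuallyEq (Filter.Eventually.of_forall fun x => (hη x))
  -- derivative of log |ξ|
  have hlogd : ∀ t ∈ Ioo (-1 : ℝ) 1, ξ t ≠ 0 →
      deriv (fun s => Real.log |ξ s|) t = deriv ξ t / ξ t := by
    intro t ht hne
    have : (fun s => Real.log |ξ s|) = fun s => Real.log (ξ s) := by
      funext s; rw [Real.log_abs]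
    rw [this]
    exact ((hdiff t ht).log hne).deriv
  -- strict antitonicity of r = ξ'/ξ on each side
  have hanti : ∀ a b : ℝ, -1 ≤ a → b ≤ 1 → Ioo a b ⊆ Ioo (-1:ℝ) 1 →
      (∀ x ∈ Ioo a b, ξ x ≠ 0) → (∀ x ∈ Ioo a b, x ≠ t₀) →
      StrictAntiOn (fun s => deriv ξ s / ξ s) (Ioo a b) := by
    intro a b ha hb hsub hne hnet
    apply strictAntiOn_of_deriv_neg (convex_Ioo a b)
    · exact ((hcξ'.mono hsub).div ((hcξ.mono (hsub.trans Ioo_subset_Icc_self))) hne)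
    · intro x hx
      rw [interior_Ioo] at hx
      have heq : deriv (fun s => deriv ξ s / ξ s) x
          = deriv (deriv (fun s => Real.log |ξ s|)) x := by
        apply Filter.EventuallyEq.deriv_eq
        filter_upwards [isOpen_Ioo.mem_nhds hx] with y hy
        exact (hlogd y (hsub hy) (hne y hy)).symm
      rw [heq]
      exact hlogconc x (hsub hx) (hnet x hx)
  have hanti₁ : StrictAntiOn (fun s => deriv ξ s / ξ s) (Ioo (-1) t₀) :=
    hanti (-1) t₀ le_rfl (le_of_lt ht₀2) (Ioo_subset_Ioo le_rfl (le_of_lt ht₀2))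
      (fun x hx => ne_of_gt (hpos x hx)) (fun x hx => ne_of_lt hx.2)
  have hanti₂ : StrictAntiOn (fun s => deriv ξ s / ξ s) (Ioo t₀ 1) :=
    hanti t₀ 1 (le_of_lt ht₀1) le_rfl (Ioo_subset_Ioo (le_of_lt ht₀1) le_rfl)
      (fun x hx => ne_of_lt (hneg x hx)) (fun x hx => ne_of_gt hx.1)
  -- endpoint signs
  have hξm1 : 0 ≤ ξ (-1) := by
    have hcw : ContinuousWithinAt ξ (Ioo (-1) t₀) (-1) :=
      (hcξ (-1) (by norm_num)).mono (Ioo_subset_Icc_self.trans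
        (Icc_subset_Icc le_rfl (le_of_lt ht₀2)))
    have hne : (nhdsWithin (-1:ℝ) (Ioo (-1) t₀)).NeBot := left_nhdsWithin_Ioo_neBot ht₀1
    exact ge_of_tendsto hcw (by
      filter_upwards [self_mem_nhdsWithin] with y hy
      exact le_of_lt (hpos y hy))
  have hξ1 : ξ 1 ≤ 0 := by
    have hcw : ContinuousWithinAt ξ (Ioo t₀ 1) 1 :=
      (hcξ 1 (by norm_num)).mono (Ioo_subset_Icc_self.trans
        (Icc_subset_Icc (le_of_lt ht₀1) le_rfl))
    have hne : (nhdsWithin (1:ℝ) (Ioo t₀ 1)).NeBot := right_nhdsWithin_Ioo_neBot ht₀2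
    exact le_of_tendsto hcw (by
      filter_upwards [self_mem_nhdsWithin] with y hy
      exact le_of_lt (hneg y hy))
  have hηm1 : η (-1) = 0 := by rw [hη, intervalIntegral.integral_same]
  -- main
  intro t ht
  rcases lt_trichotomy t t₀ with hlt | heq | hgt
  · -- t < t₀, ξ t > 0
    have hξt : 0 < ξ t := hpos t ⟨ht.1, hlt⟩
    set c := deriv ξ t / ξ t with hc
    have hG : StrictMonoOn (fun x => ξ x - c * η x) (Icc (-1) t) := by
      apply strictMonoOn_of_deriv_pos (convex_Icc _ _)
      · have hsub : Icc (-1:ℝ) t ⊆ Icc (-1:ℝ) 1 :=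
          Icc_subset_Icc le_rfl (le_of_lt ht.2)
        exact (hcξ.mono hsub).sub ((continuousOn_const).mul (hηc.mono hsub))
      · intro x hx
        rw [interior_Icc] at hx
        have hx1 : x ∈ Ioo (-1:ℝ) 1 := ⟨hx.1, lt_trans hx.2 ht.2⟩
        have hd : HasDerivAt (fun x => ξ x - c * η x) (deriv ξ x - c * ξ x) x :=
          (hdiff x hx1).sub ((hηd x hx1).const_mul c)
        rw [hd.deriv]
        have hxpos : 0 < ξ x := hpos x ⟨hx.1, lt_trans hx.2 hlt⟩
        have hr : deriv ξ x / ξ x > c :=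
          hanti₁ ⟨hx.1, lt_trans hx.2 hlt⟩ ⟨ht.1, hlt⟩ hx.2
        have hxne : ξ x ≠ 0 := ne_of_gt hxpos
        have : deriv ξ x = (deriv ξ x / ξ x) * ξ x := by
          field_simp
        nlinarith [mul_pos (sub_pos.mpr hr) hxpos]
    have hkey : ξ (-1) - c * η (-1) < ξ t - c * η t :=
      hG ⟨le_rfl, le_of_lt ht.1⟩ ⟨le_of_lt ht.1, le_rfl⟩ ht.1
    rw [hηm1] at hkey
    have h2 : 0 < ξ t - c * η t := by linarith
    have htne : ξ t ≠ 0 := ne_of_gt hξt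
    have h3 : ξ t * (ξ t - c * η t) = ξ t ^ 2 - η t * deriv ξ t := by
      rw [hc]; field_simp
    nlinarith [mul_pos hξt h2]
  · -- t = t₀
    subst heq
    have hηpos : 0 < η t := by
      rw [hη]
      apply intervalIntegral.intervalIntegral_pos_of_pos_on
        (hInt (-1) t (by norm_num) ⟨le_of_lt ht.1, le_of_lt ht.2⟩)
        (fun x hx => hpos x hx) ht.1
    rw [hroot]
    nlinarith [mul_pos hηpos (neg_pos.mpr hξ')]
  · -- t > t₀, ξ t < 0
    have hξt : ξ t < 0 := hneg t ⟨hgt, ht.2⟩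
    set c := deriv ξ t / ξ t with hc
    have hG : StrictMonoOn (fun x => ξ x - c * η x) (Icc t 1) := by
      apply strictMonoOn_of_deriv_pos (convex_Icc _ _)
      · have hsub : Icc t (1:ℝ) ⊆ Icc (-1:ℝ) 1 :=
          Icc_subset_Icc (le_of_lt ht.1) le_rfl
        exact (hcξ.mono hsub).sub ((continuousOn_const).mul (hηc.mono hsub))
      · intro x hx
        rw [interior_Icc] at hx
        have hx1 : x ∈ Ioo (-1:ℝ) 1 := ⟨lt_trans ht.1 hx.1, hx.2⟩
        have hd : HasDerivAt (fun x => ξ x - c * η x) (deriv ξ x - c * ξ x) x :=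
          (hdiff x hx1).sub ((hηd x hx1).const_mul c)
        rw [hd.deriv]
        have hxneg : ξ x < 0 := hneg x ⟨lt_trans hgt hx.1, hx.2⟩
        have hr : deriv ξ x / ξ x < c :=
          hanti₂ ⟨hgt, ht.2⟩ ⟨lt_trans hgt hx.1, hx.2⟩ hx.1
        have hxne : ξ x ≠ 0 := ne_of_lt hxneg
        have : deriv ξ x = (deriv ξ x / ξ x) * ξ x := by
          field_simp
        nlinarith [mul_pos_of_neg_of_neg (sub_neg.mpr hr) hxneg]
    have hkey : ξ t - c * η t < ξ 1 - c * η 1 :=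
      hG ⟨le_rfl, le_of_lt ht.2⟩ ⟨le_of_lt ht.2, le_rfl⟩ ht.2
    rw [hη1] at hkey
    have h2 : ξ t - c * η t < 0 := by linarith
    have htne : ξ t ≠ 0 := ne_of_lt hξt
    have h3 : ξ t * (ξ t - c * η t) = ξ t ^ 2 - η t * deriv ξ t := by
      rw [hc]; field_simp
    nlinarith [mul_pos_of_neg_of_neg hξt h2]
end

section
/- Let p_c(t) = (1+t)^{d_0}(1-t)^{d_∞}∏_{a}(1+x_a t)^{d_a} with 0<|x_a|<1, and define P(t) = 2∫_{-1}^t [(∑_a d_a s_a x_a/(1+x_a s))·p_c(s) - (β_0/α_0)p_c(s)] ds + 2p_c(-1), where α_0 = ∫_{-1}^1 p_c, β_0 = p_c(1)+p_c(-1)+∫_{-1}^1 (∑_a d_a s_a x_a/(1+x_a t))p_c(t)dt. Then P(-1) = 2p_c(-1) and P(1) = -2p_c(1). In particular, if d_0 = 0 then P(-1) > 0, and if d_∞ = 0 then P(1) < 0; if d_0 > 0 then P(-1)=0 and if d_∞ > 0 then P(1) = 0. -/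
open Real Set intervalIntegral

theorem P_boundary_values
    {ι : Type*} [Fintype ι]
    (d₀ d_inf : ℕ) (s₀ s_inf : ℝ)
    (d : ι → ℕ) (x s : ι → ℝ) (hx : ∀ a, 0 < |x a| ∧ |x a| < 1)
    (pc g P : ℝ → ℝ)
    (hpc : ∀ t, pc t = (1 + t) ^ d₀ * (1 - t) ^ d_inf * ∏ a, (1 + x a * t) ^ d a)
    (hg : ∀ t, g t = ((d₀ : ℝ) * s₀ / (1 + t) + (d_inf : ℝ) * s_inf * (-1) / (1 - t)
        + ∑ a, (d a : ℝ) * s a * x a / (1 + x a * t)) * pc t)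
    (α₀ β₀ : ℝ)
    (hα₀ : α₀ = ∫ t in (-1 : ℝ)..1, pc t)
    (hβ₀ : β₀ = pc 1 + pc (-1) + ∫ t in (-1 : ℝ)..1, g t)
    (hP : ∀ t, P t = 2 * (∫ u in (-1 : ℝ)..t, (g u - (β₀ / α₀) * pc u)) + 2 * pc (-1)) :
    P (-1) = 2 * pc (-1) ∧ P 1 = -2 * pc 1 ∧
    (d₀ = 0 → P (-1) > 0) ∧ (d_inf = 0 → P 1 < 0) ∧
    (d₀ > 0 → P (-1) = 0) ∧ (d_inf > 0 → P 1 = 0) := by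
  -- positivity of 1 + x a * t for |t| ≤ 1
  have hxa : ∀ (a : ι) (t : ℝ), |t| ≤ 1 → 0 < 1 + x a * t := by
    intro a t ht
    have h1 : |x a * t| < 1 := by
      rw [abs_mul]
      calc |x a| * |t| ≤ |x a| * 1 := by
            exact mul_le_mul_of_nonneg_left ht (abs_nonneg _)
        _ = |x a| := mul_one _
        _ < 1 := (hx a).2
    linarith [(abs_lt.mp h1).1]
  -- pc positive on Ioo, continuous
  have hpcpos : ∀ t ∈ Ioo (-1:ℝ) 1, 0 < pc t := by
    intro t ht
    rw [hpc]
    have h1 : (0:ℝ) < 1 + t := by linarith [ht.1]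
    have h2 : (0:ℝ) < 1 - t := by linarith [ht.2]
    have h3 : (0:ℝ) < ∏ a, (1 + x a * t) ^ d a := by
      apply Finset.prod_pos
      intro a _
      exact pow_pos (hxa a t (abs_le.mpr ⟨le_of_lt ht.1, le_of_lt ht.2⟩)) _
    positivity
  have hpcfun : pc = fun t => (1 + t) ^ d₀ * (1 - t) ^ d_inf * ∏ a, (1 + x a * t) ^ d a :=
    funext hpc
  have hpccont : Continuous pc := by
    rw [hpcfun]
    exact (((continuous_const.add continuous_id).pow _).mul
      ((continuous_const.sub continuous_id).pow _)).mul
      (continuous_finset_prod _ (fun a _ => ((continuous_const.add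
        (continuous_const.mul continuous_id)).pow _)))
  have hpcint : IntervalIntegrable pc MeasureTheory.volume (-1 : ℝ) 1 :=
    hpccont.intervalIntegrable _ _
  have hα₀pos : 0 < α₀ := by
    rw [hα₀]
    exact intervalIntegral_pos_of_pos_on hpcint hpcpos (by norm_num)
  -- continuous substitute G for g
  set S : ℝ → ℝ := fun t => ∑ a, (d a : ℝ) * s a * x a / (1 + x a * t) with hS
  set G : ℝ → ℝ := fun t =>
      (d₀ : ℝ) * s₀ * ((1 + t) ^ (d₀ - 1) * (1 - t) ^ d_inf * ∏ a, (1 + x a * t) ^ d a)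
      - (d_inf : ℝ) * s_inf * ((1 + t) ^ d₀ * (1 - t) ^ (d_inf - 1) * ∏ a, (1 + x a * t) ^ d a)
      + S t * pc t with hG
  have hScont : ContinuousOn S (Icc (-1:ℝ) 1) := by
    apply continuousOn_finset_sum
    intro a _
    apply ContinuousOn.div continuousOn_const
    · exact (continuousOn_const.add (continuousOn_const.mul continuousOn_id))
    · intro t ht
      exact ne_of_gt (hxa a t (abs_le.mpr ⟨ht.1, ht.2⟩))
  have hGcont : ContinuousOn G (Icc (-1:ℝ) 1) := by
    apply ContinuousOn.add
    · apply ContinuousOn.sub <;> exact Continuous.continuousOn (by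
        exact continuous_const.mul ((((continuous_const.add continuous_id).pow _).mul
          ((continuous_const.sub continuous_id).pow _)).mul
          (continuous_finset_prod _ (fun a _ => ((continuous_const.add
            (continuous_const.mul continuous_id)).pow _)))))
    · exact hScont.mul hpccont.continuousOn
  have hgeq : ∀ t ∈ Ioo (-1:ℝ) 1, g t = G t := by
    intro t ht
    have h1 : (0:ℝ) < 1 + t := by linarith [ht.1]
    have h2 : (0:ℝ) < 1 - t := by linarith [ht.2]
    rw [hg]
    have e1 : (d₀ : ℝ) * s₀ / (1 + t) * ((1 + t) ^ d₀ * (1 - t) ^ d_inf * ∏ a, (1 + x a * t) ^ d a)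
        = (d₀ : ℝ) * s₀ * ((1 + t) ^ (d₀ - 1) * (1 - t) ^ d_inf * ∏ a, (1 + x a * t) ^ d a) := by
      cases d₀ with
      | zero => simp
      | succ k =>
        rw [pow_succ]
        field_simp
        rw [Nat.add_sub_cancel]
        ring
    have e2 : (d_inf : ℝ) * s_inf * (-1) / (1 - t) *
          ((1 + t) ^ d₀ * (1 - t) ^ d_inf * ∏ a, (1 + x a * t) ^ d a)
        = -((d_inf : ℝ) * s_inf *
            ((1 + t) ^ d₀ * (1 - t) ^ (d_inf - 1) * ∏ a, (1 + x a * t) ^ d a)) := by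
      cases d_inf with
      | zero => simp
      | succ k =>
        rw [pow_succ]
        field_simp
        rw [Nat.add_sub_cancel]
        ring
    have hGt : G t = (d₀ : ℝ) * s₀ * ((1 + t) ^ (d₀ - 1) * (1 - t) ^ d_inf * ∏ a, (1 + x a * t) ^ d a)
        - (d_inf : ℝ) * s_inf * ((1 + t) ^ d₀ * (1 - t) ^ (d_inf - 1) * ∏ a, (1 + x a * t) ^ d a)
        + (∑ a, (d a : ℝ) * s a * x a / (1 + x a * t)) * pc t := rfl
    rw [hGt, hpc]
    linear_combination e1 + e2
  have hGint : IntervalIntegrable G MeasureTheory.volume (-1 : ℝ) 1 := by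
    apply ContinuousOn.intervalIntegrable
    rwa [uIcc_of_le (by norm_num : (-1:ℝ) ≤ 1)]
  have hgint : IntervalIntegrable g MeasureTheory.volume (-1 : ℝ) 1 := by
    apply hGint.congr_ae
    rw [uIoc_of_le (by norm_num : (-1:ℝ) ≤ 1)]
    have hne : ∀ᵐ (t : ℝ) ∂(MeasureTheory.volume.restrict (Ioc (-1:ℝ) 1)), t ∉ ({1} : Set ℝ) :=
      Filter.Eventually.filter_mono (MeasureTheory.ae_mono MeasureTheory.Measure.restrict_le_self)
        (MeasureTheory.measure_eq_zero_iff_ae_notMem.mp Real.volume_singleton)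
    have hmem : ∀ᵐ (t : ℝ) ∂(MeasureTheory.volume.restrict (Ioc (-1:ℝ) 1)), t ∈ Ioc (-1:ℝ) 1 :=
      MeasureTheory.ae_restrict_mem measurableSet_Ioc
    filter_upwards [hne, hmem] with t h1 h2
    exact (hgeq t ⟨h2.1, lt_of_le_of_ne h2.2 (by simpa using h1)⟩).symm
  -- value of P 1
  have hP1 : P 1 = -2 * pc 1 := by
    rw [hP]
    rw [intervalIntegral.integral_sub hgint (hpcint.const_mul _),
      intervalIntegral.integral_const_mul, ← hα₀]
    rw [div_mul_cancel₀ _ (ne_of_gt hα₀pos), hβ₀]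
    ring
  have hPneg1 : P (-1) = 2 * pc (-1) := by
    rw [hP, intervalIntegral.integral_same]
    ring
  -- endpoint values of pc
  have hprodpos1 : (0:ℝ) < ∏ a, (1 + x a * 1) ^ d a :=
    Finset.prod_pos (fun a _ => pow_pos (hxa a 1 (by norm_num)) _)
  have hprodposm1 : (0:ℝ) < ∏ a, (1 + x a * (-1)) ^ d a :=
    Finset.prod_pos (fun a _ => pow_pos (hxa a (-1) (by norm_num)) _)
  refine ⟨hPneg1, hP1, ?_, ?_, ?_, ?_⟩
  · intro h0
    subst h0
    rw [hPneg1, hpc]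
    have h2 : (0:ℝ) < (1 - (-1):ℝ) ^ d_inf := by norm_num
    simp only [pow_zero, one_mul]
    nlinarith [mul_pos h2 hprodposm1]
  · intro h0
    subst h0
    rw [hP1, hpc]
    have h2 : (0:ℝ) < (1 + (1:ℝ)) ^ d₀ := by norm_num
    have hp : (0:ℝ) < ∏ a, (1 + x a) ^ d a := by
      convert hprodpos1 using 3 with a
      rw [mul_one]
    simp only [pow_zero, mul_one]
    nlinarith [mul_pos h2 hp]
  · intro h0
    rw [hPneg1, hpc]
    have : (1 + (-1:ℝ)) ^ d₀ = 0 := by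
      rw [show (1 + (-1:ℝ)) = 0 by norm_num, zero_pow (by omega : d₀ ≠ 0)]
    rw [this]; ring
  · intro h0
    rw [hP1, hpc]
    have : (1 - (1:ℝ)) ^ d_inf = 0 := by
      rw [show (1 - (1:ℝ)) = 0 by norm_num, zero_pow (by omega : d_inf ≠ 0)]
    rw [this]; ring
end
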